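/- Let u be an arithmetic sequence with ratios b_n and x ∈ [0,1) with support S and S_b = {n : c_n = b_n − 1}. Let E ⊆ ℕ be infinite and k ∈ ℕ with S_k(E) := ⋃_{j=0}^k (E + j) ⊆ S_b. If there exists an infinite F ⊆ E + k with lim_{m∈F} (c_{m+1}+1)/b_{m+1} = 1 and F + 1 not b-bounded, then there exists an infinite B ⊆ E with ‖u_{n−1}x‖ → 0 along n ∈ B. -/

import Mathlib

open Filter

lemma tele_hasSum (u b : ℕ → ℕ) (hu1 : ∀ n, 1 ≤ u n) (hb2 : ∀ n, 2 ≤ b (n + 1))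
    (hb : ∀ n, u (n + 1) = b (n + 1) * u n) (N : ℕ) :
    HasSum (fun j : ℕ => (((b (N + j + 1) : ℝ) - 1) * u N) / u (N + j + 1)) 1 := by
  have upos : ∀ n, (0:ℝ) < u n := fun n => by exact_mod_cast hu1 n
  set f : ℕ → ℝ := fun j => (u N : ℝ) / u (N + j) with hf
  have hterm : ∀ j, (((b (N + j + 1) : ℝ) - 1) * u N) / u (N + j + 1) = f j - f (j + 1) := by
    intro j
    have h1 : (u (N + j + 1) : ℝ) = b (N + j + 1) * u (N + j) := by exact_mod_cast hb (N + j)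
    have hb0 : (0:ℝ) < b (N + j + 1) := by
      have h2 : (2:ℝ) ≤ b (N + j + 1) := by exact_mod_cast hb2 (N + j)
      linarith
    show _ = (u N : ℝ) / u (N + j) - (u N : ℝ) / u (N + (j + 1))
    rw [show N + (j + 1) = N + j + 1 from rfl, h1]
    have hu0 : (0:ℝ) < u (N + j) := upos _
    field_simp
  have hnn : ∀ j, 0 ≤ (((b (N + j + 1) : ℝ) - 1) * u N) / u (N + j + 1) := by
    intro j
    have h2 : (2:ℝ) ≤ b (N + j + 1) := by exact_mod_cast hb2 (N + j)
    apply div_nonneg (mul_nonneg (by linarith) (upos N).le) (upos _).le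
  rw [hasSum_iff_tendsto_nat_of_nonneg hnn]
  have hps : ∀ n, ∑ i ∈ Finset.range n, (((b (N + i + 1) : ℝ) - 1) * u N) / u (N + i + 1)
      = 1 - f n := by
    intro n
    simp only [hterm]
    rw [Finset.sum_range_sub' f n]
    simp [hf, div_self (upos N).ne']
  simp only [hps]
  have hf0 : Tendsto f atTop (nhds 0) := by
    have hpow : ∀ n : ℕ, (2:ℝ)^n ≤ u (N + n) := by
      intro n
      induction n with
      | zero => simpa using (by exact_mod_cast hu1 N : (1:ℝ) ≤ u N)
      | succ n ih =>
        have h1 : (u (N + n + 1) : ℝ) = b (N + n + 1) * u (N + n) := by exact_mod_cast hb (N + n)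
        have h2 : (2:ℝ) ≤ b (N + n + 1) := by exact_mod_cast hb2 (N + n)
        calc (2:ℝ)^(n+1) = 2 * 2^n := by ring
        _ ≤ b (N + n + 1) * u (N + n) := by
            apply mul_le_mul h2 ih (by positivity) (by linarith)
        _ = (u (N + (n + 1)) : ℝ) := by rw [show N + (n + 1) = N + n + 1 from rfl, h1]
    apply squeeze_zero (fun n => (div_nonneg (upos N).le (upos _).le))
      (g := fun n => (u N : ℝ) * (1/2)^n)
    · intro n
      have : (u N : ℝ) / u (N + n) ≤ (u N : ℝ) / 2^n := by
        gcongr <;> first | positivity | exact hpow n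
      simpa [div_eq_mul_inv, one_div, inv_pow] using this
    · simpa using (tendsto_pow_atTop_nhds_zero_of_lt_one (by norm_num) (by norm_num : (1/2:ℝ) < 1)).const_mul (u N : ℝ)
  simpa using (tendsto_const_nhds.sub hf0)

set_option maxHeartbeats 1000000 in
/-- Claim DD (contrapositive form): if `E` is infinite, `S_k(E) = ⋃_{j≤k} (E+j) ⊆ S_b`, and
there is an infinite `F ⊆ E + k` with `(c_{m+1}+1)/b_{m+1} → 1` along `F` and `F + 1` not
`b`-bounded, then `‖u_{n-1} x‖ → 0` along some infinite `B ⊆ E`. -/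
theorem stmt_12 (u b c : ℕ → ℕ) (x : ℝ)
    (hu0 : u 0 = 1) (humono : StrictMono u)
    (hb : ∀ n, u (n + 1) = b (n + 1) * u n)
    (hx0 : 0 ≤ x) (hx1 : x < 1)
    (hc0 : c 0 = 0)
    (hsum : x = ∑' n : ℕ, (c (n + 1) : ℝ) / (u (n + 1) : ℝ))
    (hclt : ∀ n, c (n + 1) < b (n + 1))
    (hcinf : {n : ℕ | c (n + 1) + 1 < b (n + 1)}.Infinite)
    (k : ℕ) (E F : Set ℕ)
    (hE : E.Infinite)
    (hSk : ∀ n ∈ E, ∀ j ≤ k, 1 ≤ n + j ∧ c (n + j) + 1 = b (n + j))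
    (hF : F ⊆ (fun n => n + k) '' E) (hFinf : F.Infinite)
    (hlim : Tendsto (fun m : ℕ => ((c (m + 1) : ℝ) + 1) / (b (m + 1) : ℝ))
      (atTop ⊓ 𝓟 F) (nhds 1))
    (hnb : ¬ ∃ M : ℕ, ∀ m ∈ F, b (m + 1) ≤ M) :
    ∃ B ⊆ E, B.Infinite ∧
      Tendsto (fun n : ℕ => |(u (n - 1) : ℝ) * x - (round ((u (n - 1) : ℝ) * x) : ℝ)|)
        (atTop ⊓ 𝓟 B) (nhds 0) := by
  -- basic facts
  have hu1 : ∀ n, 1 ≤ u n := fun n => hu0 ▸ humono.monotone (Nat.zero_le n)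
  have upos : ∀ n, (0:ℝ) < u n := fun n => by exact_mod_cast hu1 n
  have hb2 : ∀ n, 2 ≤ b (n + 1) := by
    intro n
    by_contra h
    push_neg at h
    have h1 : b (n+1) * u n ≤ 1 * u n := Nat.mul_le_mul_right _ (by omega)
    have h2 := humono (Nat.lt_succ_self n)
    rw [hb n] at h2
    omega
  have hb2R : ∀ n, (2:ℝ) ≤ b (n + 1) := fun n => by exact_mod_cast hb2 n
  have udvd : ∀ m n : ℕ, m ≤ n → u m ∣ u n := by
    intro m n h
    induction n, h using Nat.le_induction with
    | base => exact dvd_refl _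
    | succ n hmn ih => rw [hb n]; exact ih.mul_left _
  -- summability of the digit series
  have hxs : Summable (fun n : ℕ => (c (n + 1) : ℝ) / u (n + 1)) := by
    have h0 := (tele_hasSum u b hu1 hb2 hb 0).summable
    refine Summable.of_nonneg_of_le (fun n => by positivity) (fun n => ?_) h0
    have hc : (c (n+1):ℝ) + 1 ≤ b (n+1) := by exact_mod_cast hclt n
    simp only [Nat.zero_add, hu0, Nat.cast_one, mul_one]
    gcongr <;> first | positivity | linarith
  have hsN : ∀ N, Summable (fun n : ℕ => (u N : ℝ) * ((c (n + 1) : ℝ) / u (n + 1))) :=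
    fun N => hxs.mul_left _
  have hsh : ∀ N, Summable (fun j : ℕ => (u N : ℝ) * ((c (N + j + 1) : ℝ) / u (N + j + 1))) := by
    intro N
    have h := (summable_nat_add_iff N).2 (hsN N)
    exact (summable_congr (fun j => by rw [Nat.add_comm N j])).2 h
  -- key difference HasSum
  have key : ∀ N : ℕ, HasSum
      (fun j : ℕ => ((b (N + j + 1) : ℝ) - 1 - (c (N + j + 1) : ℝ)) * u N / u (N + j + 1))
      (1 - ∑' j : ℕ, (u N : ℝ) * ((c (N + j + 1) : ℝ) / u (N + j + 1))) := by
    intro N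
    have h1 := tele_hasSum u b hu1 hb2 hb N
    have h2 := (hsh N).hasSum
    have heq : (fun j : ℕ => ((b (N + j + 1) : ℝ) - 1 - (c (N + j + 1) : ℝ)) * u N / u (N + j + 1))
        = fun j : ℕ => ((b (N + j + 1) : ℝ) - 1) * u N / u (N + j + 1)
            - (u N : ℝ) * ((c (N + j + 1) : ℝ) / u (N + j + 1)) := by
      funext j; ring
    rw [heq]
    exact h1.sub h2
  -- decomposition into integer part + tail
  have hdecomp : ∀ N : ℕ, (u N : ℝ) * x =
      ((∑ i ∈ Finset.range N, c (i + 1) * (u N / u (i + 1)) : ℕ) : ℝ)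
      + ∑' j : ℕ, (u N : ℝ) * ((c (N + j + 1) : ℝ) / u (N + j + 1)) := by
    intro N
    have hs := hsN N
    have hsplit := Summable.sum_add_tsum_nat_add N hs
    have htail : ∑' i : ℕ, (u N : ℝ) * ((c (i + N + 1) : ℝ) / u (i + N + 1))
        = ∑' j : ℕ, (u N : ℝ) * ((c (N + j + 1) : ℝ) / u (N + j + 1)) :=
      tsum_congr fun j => by rw [Nat.add_comm j N]
    have htot : ∑' n : ℕ, (u N : ℝ) * ((c (n + 1) : ℝ) / u (n + 1)) = (u N : ℝ) * x := by
      rw [tsum_mul_left, ← hsum]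
    have hint : ((∑ i ∈ Finset.range N, c (i + 1) * (u N / u (i + 1)) : ℕ) : ℝ)
        = ∑ i ∈ Finset.range N, (u N : ℝ) * ((c (i + 1) : ℝ) / u (i + 1)) := by
      push_cast
      refine Finset.sum_congr rfl fun i hi => ?_
      have hd : u (i + 1) ∣ u N := udvd _ _ (Finset.mem_range.1 hi)
      rw [Nat.cast_div hd (upos _).ne']
      ring
    rw [hint, ← htail, ← htot, ← hsplit]
  -- the main pointwise bound on elements of E
  have hbound : ∀ n ∈ E, |(u (n - 1) : ℝ) * x - (round ((u (n - 1) : ℝ) * x) : ℝ)| ≤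
      (1 - ((c (n + k + 1) : ℝ) + 1) / (b (n + k + 1) : ℝ)) + 1 / (b (n + k + 1) : ℝ) := by
    intro n hn
    have hn1 : 1 ≤ n := by simpa using (hSk n hn 0 (Nat.zero_le k)).1
    set N := n - 1 with hNdef
    have hNn : N + 1 = n := Nat.sub_add_cancel hn1
    set M := n + k + 1 with hMdef
    have hkey := key N
    have hdec := hdecomp N
    set T := ∑' j : ℕ, (u N : ℝ) * ((c (N + j + 1) : ℝ) / u (N + j + 1)) with hTdef
    set d : ℕ → ℝ :=
      fun j => ((b (N + j + 1) : ℝ) - 1 - (c (N + j + 1) : ℝ)) * u N / u (N + j + 1) with hddef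
    clear_value T d
    have hd0 : ∀ j, 0 ≤ d j := by
      intro j
      have hc : (c (N + j + 1):ℝ) + 1 ≤ b (N + j + 1) := by exact_mod_cast hclt (N + j)
      simp only [hddef]
      exact div_nonneg (mul_nonneg (by linarith) (upos N).le) (upos _).le
    have hdz : ∀ j ≤ k, d j = 0 := by
      intro j hj
      have h := (hSk n hn j hj).2
      have hidx : N + j + 1 = n + j := by omega
      have hcb : (c (n + j) : ℝ) + 1 = b (n + j) := by exact_mod_cast h
      simp only [hddef, hidx]
      rw [show ((b (n + j) : ℝ) - 1 - c (n + j)) = 0 by linarith, zero_mul, zero_div]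
    have hsum1 := hkey.summable
    have e1 : 1 - T = ∑' j : ℕ, d (j + (k + 1)) := by
      have h := Summable.sum_add_tsum_nat_add (k+1) hsum1
      rw [hkey.tsum_eq] at h
      have hz : ∑ i ∈ Finset.range (k + 1), d i = 0 :=
        Finset.sum_eq_zero fun i hi => hdz i (by have := Finset.mem_range.1 hi; omega)
      rw [hz, zero_add] at h
      exact h.symm
    have hsum2 : Summable fun j : ℕ => d (j + (k + 1)) := (summable_nat_add_iff (k + 1)).2 hsum1
    have e2 : ∑' j : ℕ, d (j + (k + 1)) = d (k + 1) + ∑' j : ℕ, d (j + 1 + (k + 1)) := by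
      have h := Summable.sum_add_tsum_nat_add 1 hsum2
      rw [Finset.sum_range_one] at h
      rw [← h, Nat.zero_add]
    have hidx2 : ∀ j : ℕ, N + (j + 1 + (k + 1)) + 1 = M + j + 1 := by intro j; omega
    have htail : HasSum (fun j : ℕ => ((b (M + j + 1) : ℝ) - 1) * u N / u (M + j + 1))
        ((u N : ℝ) / (u M : ℝ)) := by
      have h1 := (tele_hasSum u b hu1 hb2 hb M).mul_left ((u N : ℝ) / (u M : ℝ))
      rw [mul_one] at h1
      have heq : (fun j : ℕ => ((u N : ℝ) / (u M : ℝ)) *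
            (((b (M + j + 1) : ℝ) - 1) * u M / u (M + j + 1)))
          = fun j : ℕ => ((b (M + j + 1) : ℝ) - 1) * u N / u (M + j + 1) := by
        funext j
        have h0 : (u M : ℝ) ≠ 0 := (upos M).ne'
        have harith : ∀ p q r s : ℝ, q ≠ 0 → p / q * (r * q / s) = r * p / s := by
          intro p q r s hq
          have h1 : p / q * (r * q / s) = q * (r * p) / (q * s) := by ring
          rw [h1, mul_div_mul_left _ _ hq]
        exact harith _ _ _ _ h0
      rwa [heq] at h1
    have hsum3 : Summable fun j : ℕ => d (j + 1 + (k + 1)) := (summable_nat_add_iff 1).2 hsum2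
    have e3 : ∑' j : ℕ, d (j + 1 + (k + 1)) ≤ (u N : ℝ) / u M := by
      rw [← htail.tsum_eq]
      refine Summable.tsum_le_tsum (fun j => ?_) hsum3 htail.summable
      simp only [hddef, hidx2 j]
      have hc : (0:ℝ) ≤ c (M + j + 1) := by positivity
      have h2 : ((b (M + j + 1) : ℝ) - 1 - c (M + j + 1)) ≤ (b (M + j + 1) : ℝ) - 1 := by
        linarith
      exact (div_le_div_iff_of_pos_right (upos _)).2 (mul_le_mul_of_nonneg_right h2 (upos N).le)
    have edk : d (k + 1) = ((b M : ℝ) - 1 - c M) * u N / u M := by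
      simp only [hddef, show N + (k + 1) + 1 = M by omega]
    have hT0 : 0 ≤ 1 - T := hasSum_le (fun i => hd0 i) hasSum_zero hkey
    have hbM2 : (2:ℝ) ≤ b M := by rw [hMdef]; exact hb2R (n + k)
    have hq : (u N : ℝ) / u M ≤ 1 / b M := by
      have hM1 : (u M : ℝ) = b M * u (n + k) := by
        rw [show M = (n + k) + 1 by omega]
        exact_mod_cast hb (n + k)
      have hle : (u N : ℝ) ≤ u (n + k) := by
        exact_mod_cast humono.monotone (by omega : N ≤ n + k)
      rw [div_le_div_iff₀ (upos M) (by linarith)]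
      calc (u N : ℝ) * b M ≤ (u (n + k) : ℝ) * b M :=
            mul_le_mul_of_nonneg_right hle (by linarith)
      _ = 1 * ((b M : ℝ) * u (n + k)) := by ring
      _ = 1 * (u M : ℝ) := by rw [hM1]
    have hbc : (c M : ℝ) + 1 ≤ b M := by
      rw [show M = (n + k) + 1 by omega]
      exact_mod_cast hclt (n + k)
    have hT1 : 1 - T ≤ (1 - ((c M : ℝ) + 1) / b M) + 1 / b M := by
      have hbM : (0:ℝ) < b M := by linarith
      have step1 : 1 - T ≤ ((b M : ℝ) - c M) * ((u N : ℝ) / u M) := by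
        rw [e1, e2, edk]
        have : ((b M : ℝ) - 1 - c M) * u N / u M + (u N : ℝ) / u M
            = ((b M : ℝ) - c M) * ((u N : ℝ) / u M) := by ring
        linarith [e3]
      have step2 : ((b M : ℝ) - c M) * ((u N : ℝ) / u M) ≤ ((b M : ℝ) - c M) * (1 / b M) :=
        mul_le_mul_of_nonneg_left hq (by linarith)
      have step3 : ((b M : ℝ) - c M) * (1 / b M) = (1 - ((c M : ℝ) + 1) / b M) + 1 / b M := by
        field_simp
        ring
      linarith
    -- conclude with round
    set A : ℕ := ∑ i ∈ Finset.range N, c (i + 1) * (u N / u (i + 1)) with hAdef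
    have hr := round_le ((u N : ℝ) * x) ((A : ℤ) + 1)
    calc |(u N : ℝ) * x - (round ((u N : ℝ) * x) : ℝ)|
        ≤ |(u N : ℝ) * x - (((A : ℤ) + 1 : ℤ) : ℝ)| := hr
      _ = 1 - T := by
          rw [hdec]
          push_cast
          rw [show (A : ℝ) + T - ((A : ℝ) + 1) = -(1 - T) by ring, abs_neg, abs_of_nonneg hT0]
      _ ≤ (1 - ((c M : ℝ) + 1) / b M) + 1 / b M := hT1
  -- construction of the subsequence with b → ∞
  have hkey2 : ∀ L Mx : ℕ, ∃ m, m ∈ F ∧ L < m ∧ Mx < b (m + 1) := by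
    intro L Mx
    push_neg at hnb
    have hsfin : (F ∩ Set.Iic L).Finite := (Set.finite_Iic L).inter_of_right F
    obtain ⟨m, hmF, hmb⟩ := hnb (max Mx (hsfin.toFinset.sup (fun m => b (m + 1))))
    refine ⟨m, hmF, ?_, lt_of_le_of_lt (le_max_left _ _) hmb⟩
    by_contra h
    push_neg at h
    have hmem : m ∈ hsfin.toFinset := hsfin.mem_toFinset.2 ⟨hmF, h⟩
    have h1 : b (m + 1) ≤ hsfin.toFinset.sup (fun m => b (m + 1)) := Finset.le_sup (f := fun m => b (m + 1)) hmem
    have h2 := le_max_right Mx (hsfin.toFinset.sup (fun m => b (m + 1)))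
    omega
  let g : ℕ → ℕ := fun i => Nat.rec (Classical.choose (hkey2 0 0))
    (fun i prev => Classical.choose (hkey2 prev (i + 1))) i
  have hg0 := Classical.choose_spec (hkey2 0 0)
  have hgspec : ∀ i, g (i + 1) ∈ F ∧ g i < g (i + 1) ∧ i + 1 < b (g (i + 1) + 1) :=
    fun i => Classical.choose_spec (hkey2 (g i) (i + 1))
  have gmono : StrictMono g := strictMono_nat_of_lt_succ fun i => (hgspec i).2.1
  have gF : ∀ i, g i ∈ F := by
    intro i
    cases i with
    | zero => exact hg0.1
    | succ i => exact (hgspec i).1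
  have hgb : ∀ i, i + 1 < b (g (i + 1) + 1) := fun i => (hgspec i).2.2
  set F' : Set ℕ := Set.range g with hF'def
  have hF'F : F' ⊆ F := by rintro _ ⟨i, rfl⟩; exact gF i
  have hF'inf : F'.Infinite := Set.infinite_range_of_injective gmono.injective
  -- B
  refine ⟨(fun m => m - k) '' F', ?_, ?_, ?_⟩
  · rintro _ ⟨m, hm, rfl⟩
    obtain ⟨n, hnE, rfl⟩ := hF (hF'F hm)
    simpa [Nat.add_sub_cancel] using hnE
  · apply Set.Infinite.image _ hF'inf
    intro m1 h1 m2 h2 hh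
    obtain ⟨n1, _, rfl⟩ := hF (hF'F h1)
    obtain ⟨n2, _, rfl⟩ := hF (hF'F h2)
    simp only [Nat.add_sub_cancel] at hh
    simp only [hh]
  · set B : Set ℕ := (fun m => m - k) '' F' with hBdef
    have hBE : B ⊆ E := by
      rintro _ ⟨m, hm, rfl⟩
      obtain ⟨n, hnE, rfl⟩ := hF (hF'F hm)
      simpa [Nat.add_sub_cancel] using hnE
    have hBF' : ∀ n ∈ B, n + k ∈ F' := by
      rintro _ ⟨m, hm, rfl⟩
      obtain ⟨n', _, rfl⟩ := hF (hF'F hm)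
      simpa [Nat.add_sub_cancel] using hm
    -- tendsto of the bound along atTop ⊓ 𝓟 F'
    have hmap : Tendsto (fun n : ℕ => n + k) (atTop ⊓ 𝓟 B) (atTop ⊓ 𝓟 F') := by
      rw [tendsto_inf]
      constructor
      · exact (tendsto_add_atTop_nat k).mono_left inf_le_left
      · rw [tendsto_principal, eventually_inf_principal]
        exact Eventually.of_forall fun n hn => hBF' n hn
    have hpsi1 : Tendsto (fun m : ℕ => 1 - ((c (m + 1) : ℝ) + 1) / b (m + 1))
        (atTop ⊓ 𝓟 F') (nhds 0) := by
      have h := hlim.mono_left (inf_le_inf_left atTop (principal_mono.2 hF'F))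
      have h2 := ((tendsto_const_nhds : Tendsto (fun _ : ℕ => (1:ℝ)) (atTop ⊓ 𝓟 F') (nhds 1)).sub h)
      simpa using h2
    have hpsi2 : Tendsto (fun m : ℕ => 1 / (b (m + 1) : ℝ)) (atTop ⊓ 𝓟 F') (nhds 0) := by
      have hbtop : Tendsto (fun m : ℕ => (b (m + 1) : ℝ)) (atTop ⊓ 𝓟 F') atTop := by
        rw [tendsto_atTop]
        intro C
        obtain ⟨i, hi⟩ := exists_nat_ge C
        rw [eventually_inf_principal]
        filter_upwards [eventually_ge_atTop (g (i + 1))] with m hm hmF'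
        obtain ⟨j, rfl⟩ := hmF'
        have hji : i + 1 ≤ j := gmono.le_iff_le.1 hm
        obtain ⟨j', rfl⟩ : ∃ j', j = j' + 1 := ⟨j - 1, by omega⟩
        have hgbj := hgb j'
        have : (i : ℝ) ≤ b (g (j' + 1) + 1) := by
          have : (i : ℕ) ≤ b (g (j' + 1) + 1) := by omega
          exact_mod_cast this
        linarith
      have := hbtop.inv_tendsto_atTop
      simpa [one_div, Pi.inv_def] using this
    have hpsi : Tendsto (fun m : ℕ => (1 - ((c (m + 1) : ℝ) + 1) / b (m + 1)) + 1 / (b (m + 1) : ℝ))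
        (atTop ⊓ 𝓟 F') (nhds 0) := by
      have := hpsi1.add hpsi2
      simpa using this
    have hcomp := hpsi.comp hmap
    refine squeeze_zero' (Eventually.of_forall fun n => abs_nonneg _) ?_ hcomp
    rw [eventually_inf_principal]
    exact Eventually.of_forall fun n hn => hbound n (hBE hn)
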